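/- Let L be a well-rounded lattice in ℝⁿ possessing a nearly orthogonal basis, and let B be any nearly orthogonal basis of L. Then every vector of B is a minimal vector of L, i.e., B ⊆ S(L). -/

import Mathlib

open scoped RealInnerProductSpace
open Submodule Metric MeasureTheory

noncomputable section

abbrev Evec (n : ℕ) := EuclideanSpace ℝ (Fin n)

/-- The lattice generated (over ℤ) by the vectors `b 0, …, b (n-1)`. -/
def latticeOf {n : ℕ} (b : Fin n → Evec n) : Set (Evec n) :=
  {x | ∃ c : Fin n → ℤ, x = ∑ i, (c i : ℝ) • b i}

/-- The set of minimal vectors `S(L)` of a lattice `L`. -/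
def minVecs {n : ℕ} (L : Set (Evec n)) : Set (Evec n) :=
  {x | x ∈ L ∧ x ≠ 0 ∧ ∀ y ∈ L, y ≠ 0 → ‖x‖ ≤ ‖y‖}

/-- `L` is well-rounded: its minimal vectors span `ℝⁿ`. -/
def IsWellRounded {n : ℕ} (L : Set (Evec n)) : Prop :=
  Submodule.span ℝ (minVecs L) = ⊤

/-- `L` has minimal norm `m`. -/
def hasMinNorm {n : ℕ} (L : Set (Evec n)) (m : ℝ) : Prop :=
  (∃ x ∈ L, x ≠ 0 ∧ ‖x‖ = m) ∧ ∀ x ∈ L, x ≠ 0 → m ≤ ‖x‖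

/-- The angle in `[0, π/2]` between a vector `v` and a subspace `V`,
whose cosine is `‖proj_V v‖ / ‖v‖`. -/
def subAngle {n : ℕ} (v : Evec n) (V : Submodule ℝ (Evec n)) : ℝ :=
  Real.arccos (‖(orthogonalProjection V v : Evec n)‖ / ‖v‖)

/-- The ordered basis `b` is weakly θ-orthogonal. -/
def WeaklyOrth {n : ℕ} (θ : ℝ) (b : Fin n → Evec n) : Prop :=
  ∀ i : Fin n, 0 < (i : ℕ) →
    θ ≤ subAngle (b i) (Submodule.span ℝ (b '' {j | j < i}))

/-- The basis `b` is θ-orthogonal: every ordering of it is weakly θ-orthogonal. -/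
def Orth {n : ℕ} (θ : ℝ) (b : Fin n → Evec n) : Prop :=
  ∀ σ : Equiv.Perm (Fin n), WeaklyOrth θ (b ∘ σ)

/-- A nearly orthogonal basis is a π/3-orthogonal basis. -/
def NearlyOrth {n : ℕ} (b : Fin n → Evec n) : Prop := Orth (Real.pi / 3) b

/-- A weakly nearly orthogonal basis is a weakly π/3-orthogonal basis. -/
def WeaklyNearlyOrth {n : ℕ} (b : Fin n → Evec n) : Prop := WeaklyOrth (Real.pi / 3) b

/-- Coherence `C(L)` of a lattice. -/
def coherence {n : ℕ} (L : Set (Evec n)) : ℝ :=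
  sSup {t | ∃ x ∈ minVecs L, ∃ y ∈ minVecs L, x ≠ y ∧ x ≠ -y ∧
    t = abs ⟪x, y⟫ / (‖x‖ * ‖y‖)}

/-- `μ(B)`: minimal absolute cosine of angles between distinct basis vectors. -/
def muB {n : ℕ} (b : Fin n → Evec n) : ℝ :=
  sInf {t | ∃ i j : Fin n, i ≠ j ∧ t = abs ⟪b i, b j⟫ / (‖b i‖ * ‖b j‖)}

/-- `ν(B)`: maximal absolute cosine of angles between distinct basis vectors. -/
def nuB {n : ℕ} (b : Fin n → Evec n) : ℝ :=
  sSup {t | ∃ i j : Fin n, i ≠ j ∧ t = abs ⟪b i, b j⟫ / (‖b i‖ * ‖b j‖)}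

/-- The determinant of the lattice with basis `b`. -/
def latDet {n : ℕ} (b : Fin n → Evec n) : ℝ :=
  |(Matrix.of fun i j : Fin n => b j i).det|

/-- Packing density of a lattice with basis `b` and minimal norm `m`:
`ω_n · m^n / (2^n · det L)`. -/
def packDensity {n : ℕ} (m : ℝ) (b : Fin n → Evec n) : ℝ :=
  (volume (ball (0 : Evec n) 1)).toReal * m ^ n / (2 ^ n * latDet b)

/-- `L` is strongly eutactic. -/
def StronglyEutactic {n : ℕ} (L : Set (Evec n)) : Prop :=
  ∃ c : ℝ, 0 < c ∧ ∀ v : Evec n, ‖v‖ ^ 2 = c * ∑ᶠ x ∈ minVecs L, ⟪v, x⟫ ^ 2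

/-- `L` is perfect: `{x xᵀ : x ∈ S(L)}` spans the symmetric `n × n` matrices. -/
def IsPerfect {n : ℕ} (L : Set (Evec n)) : Prop :=
  ∀ A : Matrix (Fin n) (Fin n) ℝ, A.IsSymm →
    A ∈ Submodule.span ℝ ((fun x : Evec n => Matrix.of fun i j => x i * x j) '' minVecs L)

end

noncomputable section AuxStmt3

open Finset in
set_option maxHeartbeats 1000000 in
/-- Near-orthogonality bound: the projection of a basis vector onto the span of
the others has norm at most half its norm. -/
lemma projHalf_aux {n : ℕ} {b : Fin n → Evec n} (hNO : NearlyOrth b)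
    (hb : LinearIndependent ℝ b) (j : Fin n) :
    ‖(orthogonalProjection (Submodule.span ℝ (b '' {i | i ≠ j})) (b j) : Evec n)‖
      ≤ ‖b j‖ / 2 := by
  by_cases hall : ∀ i : Fin n, i = j
  · have hset : {i : Fin n | i ≠ j} = ∅ := by
      ext i; simp [hall i]
    have hK : Submodule.span ℝ (b '' {i | i ≠ j}) = ⊥ := by
      rw [hset, Set.image_empty, Submodule.span_empty]
    have hK' : ∀ y ∈ Submodule.span ℝ (b '' {i | i ≠ j}), y = (0 : Evec n) :=
      (Submodule.eq_bot_iff _).1 hK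
    have h0 : ((orthogonalProjection (Submodule.span ℝ (b '' {i | i ≠ j})) (b j)) : Evec n)
        = 0 := hK' _ (orthogonalProjection (Submodule.span ℝ (b '' {i | i ≠ j})) (b j)).2
    rw [h0, norm_zero]
    positivity
  · push_neg at hall
    obtain ⟨i0, hi0⟩ := hall
    rcases n with _ | m
    · exact j.elim0
    have hm : 0 < m := by
      rcases Nat.eq_zero_or_pos m with h | h
      · subst h
        have h0 := i0.isLt
        have h1 := j.isLt
        exact absurd (Fin.ext (by omega)) hi0
      · exact h
    set σ : Equiv.Perm (Fin (m + 1)) := Equiv.swap j (Fin.last m) with hσdef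
    have hσ := hNO σ (Fin.last m) (by simpa using hm)
    have happ : (b ∘ σ) (Fin.last m) = b j := by
      simp [hσdef, Equiv.swap_apply_right]
    have hset0 : (⇑σ) '' {k | k < Fin.last m} = {i | i ≠ j} := by
      ext i
      simp only [Set.mem_image, Set.mem_setOf_eq]
      constructor
      · rintro ⟨k, hk, rfl⟩
        intro h
        have hkl : k = Fin.last m := by
          refine σ.injective ?_
          rw [h, hσdef, Equiv.swap_apply_right]
        rw [hkl] at hk
        exact absurd hk (lt_irrefl _)
      · intro hij
        refine ⟨σ i, ?_, by simp [hσdef]⟩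
        have hne : σ i ≠ Fin.last m := by
          intro h
          apply hij
          have h2 : σ (σ i) = σ (Fin.last m) := congrArg σ h
          simpa [hσdef, Equiv.swap_apply_right, Equiv.swap_apply_self] using h2
        exact Fin.lt_last_iff_ne_last.2 hne
    have hset : ((b ∘ ⇑σ) '' {k | k < Fin.last m}) = b '' {i | i ≠ j} := by
      rw [Set.image_comp, hset0]
    rw [happ, hset] at hσ
    unfold subAngle at hσ
    set W := Submodule.span ℝ (b '' {i | i ≠ j}) with hW
    set p : Evec (m + 1) := (orthogonalProjection W (b j) : Evec (m + 1)) with hp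
    have hbj0 : b j ≠ 0 := hb.ne_zero j
    have hbpos : 0 < ‖b j‖ := norm_pos_iff.2 hbj0
    have hple : ‖p‖ ≤ ‖b j‖ := by
      have h1 : ‖orthogonalProjection W (b j)‖ ≤ ‖orthogonalProjection W‖ * ‖b j‖ :=
        (orthogonalProjection W).le_opNorm (b j)
      have h2 : ‖orthogonalProjection W‖ ≤ 1 := orthogonalProjection_norm_le W
      have h3 : ‖p‖ = ‖orthogonalProjection W (b j)‖ := rfl
      nlinarith [norm_nonneg (b j)]
    have ht0 : 0 ≤ ‖p‖ / ‖b j‖ := div_nonneg (norm_nonneg _) (norm_nonneg _)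
    have ht1 : ‖p‖ / ‖b j‖ ≤ 1 := (div_le_one hbpos).2 hple
    have hcos := Real.cos_le_cos_of_nonneg_of_le_pi
      (by positivity) (Real.arccos_le_pi _) hσ
    rw [Real.cos_arccos (by linarith) ht1, Real.cos_pi_div_three] at hcos
    have := (div_le_iff₀ hbpos).1 hcos
    linarith

end AuxStmt3

set_option maxHeartbeats 1000000 in
/-- every vector of a nearly orthogonal basis of a well-rounded
lattice is a minimal vector. -/
theorem stmt_3 {n : ℕ} (b : Fin n → Evec n) (hb : LinearIndependent ℝ b)
    (hWR : IsWellRounded (latticeOf b)) (hNO : NearlyOrth b) :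
    ∀ i, b i ∈ minVecs (latticeOf b) := by
  intro j
  set W : Submodule ℝ (Evec n) := Submodule.span ℝ (b '' {i | i ≠ j}) with hWdef
  have hbjL : b j ∈ latticeOf b := by
    refine ⟨fun k => if k = j then 1 else 0, ?_⟩
    simp [apply_ite (fun z : ℤ => (z : ℝ)), ite_smul]
  have hbj0 : b j ≠ 0 := hb.ne_zero j
  have hbjW : b j ∉ W := hb.notMem_span_image (by simp)
  -- get a minimal vector not in W
  have hex : ∃ x ∈ minVecs (latticeOf b), x ∉ W := by
    by_contra h
    push_neg at h
    have hle : Submodule.span ℝ (minVecs (latticeOf b)) ≤ W := Submodule.span_le.2 h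
    rw [hWR] at hle
    exact hbjW (hle trivial)
  obtain ⟨x, ⟨hxL, hx0, hxle⟩, hxW⟩ := hex
  obtain ⟨c, hc⟩ := hxL
  set v : Evec n := ∑ i ∈ Finset.univ.erase j, (c i : ℝ) • b i with hvdef
  have hxv : x = (c j : ℝ) • b j + v := by
    rw [hc, hvdef]
    exact (Finset.add_sum_erase _ _ (Finset.mem_univ j)).symm
  have hvW : v ∈ W := by
    refine Submodule.sum_mem _ fun i hi => Submodule.smul_mem _ _ (Submodule.subset_span ?_)
    exact ⟨i, Finset.ne_of_mem_erase hi, rfl⟩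
  have hvL : v ∈ latticeOf b := by
    refine ⟨fun i => if i = j then 0 else c i, ?_⟩
    rw [hvdef]
    calc (∑ i ∈ Finset.univ.erase j, (c i : ℝ) • b i)
        = ∑ i ∈ Finset.univ.erase j, (((if i = j then 0 else c i : ℤ)) : ℝ) • b i :=
          Finset.sum_congr rfl fun i hi => by rw [if_neg (Finset.ne_of_mem_erase hi)]
      _ = ∑ i, (((if i = j then 0 else c i : ℤ)) : ℝ) • b i := by
          refine Finset.sum_subset (Finset.subset_univ _) fun i _ hi => ?_
          have hij : i = j := by simpa using hi
          rw [if_pos hij]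
          simp
  have hcj : c j ≠ 0 := by
    intro h
    apply hxW
    rw [hxv, h]
    simpa using hvW
  -- projection bound
  set p : Evec n := (orthogonalProjection W (b j) : Evec n) with hpdef
  have hp : ‖p‖ ≤ ‖b j‖ / 2 := projHalf_aux hNO hb j
  have hinner : ⟪b j, v⟫ = ⟪p, v⟫ := by
    have h0 : ⟪b j - p, v⟫ = 0 := W.starProjection_inner_eq_zero (b j) v hvW
    have := inner_sub_left (𝕜 := ℝ) (b j) p v
    rw [h0] at this
    linarith
  have hbnd : |⟪b j, v⟫| ≤ ‖b j‖ / 2 * ‖v‖ := by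
    rw [hinner]
    exact (abs_real_inner_le_norm p v).trans
      (mul_le_mul_of_nonneg_right hp (norm_nonneg v))
  -- expansion of ‖x‖²
  have hexp : ‖x‖ ^ 2 = (c j : ℝ) ^ 2 * ‖b j‖ ^ 2 + 2 * ((c j : ℝ) * ⟪b j, v⟫) + ‖v‖ ^ 2 := by
    rw [hxv, norm_add_sq_real, norm_smul, real_inner_smul_left]
    all_goals rw [mul_pow, Real.norm_eq_abs, sq_abs]
    all_goals ring
  have hcross : -(|(c j : ℝ)| * (‖b j‖ / 2 * ‖v‖)) ≤ (c j : ℝ) * ⟪b j, v⟫ := by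
    have h1 := neg_abs_le ((c j : ℝ) * ⟪b j, v⟫)
    have h2 : |(c j : ℝ) * ⟪b j, v⟫| ≤ |(c j : ℝ)| * (‖b j‖ / 2 * ‖v‖) := by
      rw [abs_mul]
      exact mul_le_mul_of_nonneg_left hbnd (abs_nonneg _)
    linarith
  have habs : (c j : ℝ) ^ 2 = |(c j : ℝ)| ^ 2 := (sq_abs _).symm
  have key : (|(c j : ℝ)|) ^ 2 * ‖b j‖ ^ 2 - |(c j : ℝ)| * (‖b j‖ / 2 * ‖v‖) * 2 + ‖v‖ ^ 2
      ≤ ‖x‖ ^ 2 := by nlinarith [hexp, hcross]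
  have hone : (1 : ℝ) ≤ |(c j : ℝ)| := by
    have : (1 : ℤ) ≤ |c j| := Int.one_le_abs hcj
    calc (1 : ℝ) ≤ ((|c j| : ℤ) : ℝ) := by exact_mod_cast this
      _ = |(c j : ℝ)| := by push_cast; ring
  have hmlebj : ‖x‖ ≤ ‖b j‖ := hxle (b j) hbjL hbj0
  have hxpos : 0 < ‖x‖ := norm_pos_iff.2 hx0
  -- derive ‖b j‖ ≤ ‖x‖
  have hbjle : ‖b j‖ ≤ ‖x‖ := by
    by_cases hv0 : v = 0
    · have hxn : ‖x‖ = |(c j : ℝ)| * ‖b j‖ := by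
        rw [hxv, hv0, add_zero, norm_smul, Real.norm_eq_abs]
      nlinarith [norm_nonneg (b j)]
    · have hvle : ‖x‖ ≤ ‖v‖ := hxle v hvL hv0
      -- |c j| = 1
      have hk1 : |(c j : ℝ)| = 1 := by
        by_contra hk
        have h2 : (2 : ℝ) ≤ |(c j : ℝ)| := by
          have hz : (1 : ℤ) ≤ |c j| := Int.one_le_abs hcj
          have hz2 : (2 : ℤ) ≤ |c j| := by
            rcases lt_or_ge (|c j|) 2 with h | h
            · exfalso
              apply hk
              have : |c j| = 1 := by omega
              calc |(c j : ℝ)| = ((|c j| : ℤ) : ℝ) := by push_cast; ring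
                _ = 1 := by rw [this]; norm_num
            · exact h
          calc (2 : ℝ) ≤ ((|c j| : ℤ) : ℝ) := by exact_mod_cast hz2
            _ = |(c j : ℝ)| := by push_cast; ring
        have hK4 : (4 : ℝ) ≤ |(c j : ℝ)| ^ 2 := by nlinarith [h2]
        have hSA : ‖x‖ ^ 2 ≤ ‖b j‖ ^ 2 := by nlinarith [hmlebj, hxpos]
        nlinarith [key, hK4, hSA, sq_nonneg (‖v‖ - |(c j : ℝ)| * ‖b j‖ / 2),
          sq_nonneg (‖b j‖), mul_pos hxpos hxpos]
      rw [hk1] at key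
      nlinarith [key, sq_nonneg (‖b j‖ - ‖v‖), hvle, hxpos, hmlebj,
        mul_pos hxpos hxpos]
  have hbjeq : ‖b j‖ = ‖x‖ := le_antisymm hbjle hmlebj
  exact ⟨hbjL, hbj0, fun y hy hy0 => hbjeq ▸ hxle y hy hy0⟩
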